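/- arXiv:1406.4940 — 2 statements merged into one kernel-verified Lean document; each statement's English description precedes it below -/
import Mathlib

section
/- Let W be a finite set, (J_v)_{v∈W} a family of finite abelian groups, and H = ∏_{v∈W} J_v. Let I(H) ⊂ ℤ[H] be the augmentation ideal. Then for every z ∈ ℤ[H], the element ∑_{X ⊆ W} (−1)^{|W∖X|} π_X(z) lies in I(H)^{|W|}. -/
/-- For a subset `X ⊆ W`, the group endomorphism `π_X` of `H = ∏_{v ∈ W} J v` which replaces
the `v`-component by the identity for every `v ∉ X` and leaves the `v`-component unchanged for
`v ∈ X`. -/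
def piProj {W : Type*} [DecidableEq W] (J : W → Type*) [∀ v, CommGroup (J v)]
    (X : Finset W) : (∀ v, J v) →* (∀ v, J v) :=
  MonoidHom.mk' (fun σ v => if v ∈ X then σ v else 1) (by
    intro a b
    funext v
    by_cases h : v ∈ X <;> simp [h])

/-- The augmentation ideal `I(H)` of the group ring `ℤ[H]`: the kernel of the ring
homomorphism `ℤ[H] → ℤ` sending every group element to `1`. -/
noncomputable def augmentationIdeal (H : Type*) [CommGroup H] :
    Ideal (MonoidAlgebra ℤ H) :=
  RingHom.ker (MonoidAlgebra.lift ℤ ℤ H 1)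

/-- Let `W` be a finite set, `(J v)_{v ∈ W}` a family of finite abelian groups and
`H = ∏_{v ∈ W} J v`.  For every `z ∈ ℤ[H]`, the element `∑_{X ⊆ W} (-1)^|W∖X| π_X(z)` lies in
`I(H)^|W|`, where `I(H)` is the augmentation ideal of `ℤ[H]` and `π_X` also denotes the ring
endomorphism of `ℤ[H]` induced by `π_X : H → H`. -/
theorem sum_proj_mem_augmentationIdeal_pow {W : Type*} [Fintype W] [DecidableEq W]
    (J : W → Type*) [∀ v, CommGroup (J v)] [∀ v, Fintype (J v)]
    (z : MonoidAlgebra ℤ (∀ v, J v)) :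
    ∑ X : Finset W, ((-1 : ℤ) ^ (Finset.univ \ X).card) •
        MonoidAlgebra.mapDomainRingHom ℤ (piProj J X) z ∈
      augmentationIdeal (∀ v, J v) ^ Fintype.card W := by
  induction z using MonoidAlgebra.induction_on with
  | of σ =>
    have key : ∑ X : Finset W, ((-1 : ℤ) ^ (Finset.univ \ X).card) •
        MonoidAlgebra.mapDomainRingHom ℤ (piProj J X) (MonoidAlgebra.of ℤ (∀ v, J v) σ)
        = ∏ v : W, (MonoidAlgebra.of ℤ (∀ v, J v) (piProj J {v} σ) - 1) := by
      simp only [sub_eq_add_neg]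
      rw [Finset.prod_add, Finset.powerset_univ]
      refine Finset.sum_congr rfl fun X _ => ?_
      have h1 : ∏ v ∈ X, MonoidAlgebra.of ℤ (∀ v, J v) (piProj J {v} σ)
          = MonoidAlgebra.of ℤ (∀ v, J v) (piProj J X σ) := by
        rw [← map_prod]
        congr 1
        funext w
        simp only [piProj, MonoidHom.mk'_apply, Finset.prod_apply, Finset.mem_singleton]
        rw [Finset.prod_ite_eq X w (fun _ => σ w)]
      have h2 : MonoidAlgebra.mapDomainRingHom ℤ (piProj J X)
          (MonoidAlgebra.of ℤ (∀ v, J v) σ) = MonoidAlgebra.of ℤ (∀ v, J v) (piProj J X σ) :=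
        MonoidAlgebra.mapDomain_single
      rw [h1, h2, Finset.prod_const, zsmul_eq_mul]
      push_cast
      ring
    rw [key, ← Finset.card_univ, ← Finset.prod_const]
    refine Ideal.prod_mem_prod fun v _ => ?_
    simp only [augmentationIdeal, RingHom.mem_ker, map_sub, map_one,
      MonoidAlgebra.lift_of, MonoidHom.one_apply, sub_self]
  | add f g hf hg =>
    simp only [map_add, smul_add, Finset.sum_add_distrib]
    exact add_mem hf hg
  | smul r f hf =>
    have : ∀ X : Finset W, MonoidAlgebra.mapDomainRingHom ℤ (piProj J X) (r • f)
        = r • MonoidAlgebra.mapDomainRingHom ℤ (piProj J X) f := by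
      intro X
      exact MonoidAlgebra.mapDomain_smul _ r f
    simp only [this, smul_comm _ r, ← Finset.smul_sum]
    exact zsmul_mem hf r
end

section
/- Let W be a nonempty finite set, (J_v)_{v∈W} a family of finite abelian groups, H = ∏_{v∈W} J_v, and set d := |W| − 1. Let I(H) ⊂ ℤ[H] be the augmentation ideal. Let M be any ℤ-module, and for X ⊆ W let π_X also denote the endomorphism of M ⊗_ℤ ℤ[H]/I(H)^{d+1} induced by π_X (which is well defined since π_X(I(H)) ⊆ I(H)). Then for every a ∈ M ⊗_ℤ ℤ[H]/I(H)^{d+1}, one has a = −∑_{X ⊆ W, X ≠ W} (−1)^{|W∖X|} π_X(a). -/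
open TensorProduct

-- factor in I
lemma of_sub_one_mem {H : Type*} [CommGroup H] (h : H) :
    MonoidAlgebra.of ℤ H h - 1 ∈ augmentationIdeal H := by
  simp [augmentationIdeal, RingHom.mem_ker, map_sub]

lemma prod_mem_pow {R α : Type*} [CommRing R] (I : Ideal R) (s : Finset α) (f : α → R)
    (h : ∀ a ∈ s, f a ∈ I) : ∏ a ∈ s, f a ∈ I ^ s.card := by
  classical
  induction s using Finset.induction with
  | empty => simp
  | @insert a s ha ih =>
    rw [Finset.prod_insert ha, Finset.card_insert_of_notMem ha, pow_succ']
    exact Ideal.mul_mem_mul (h a (Finset.mem_insert_self a s))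
      (ih fun b hb => h b (Finset.mem_insert_of_mem hb))

lemma piProj_eq_prod {W : Type*} [Fintype W] [DecidableEq W] (J : W → Type*)
    [∀ v, CommGroup (J v)] (X : Finset W) (h : ∀ v, J v) :
    piProj J X h = ∏ v ∈ X, Pi.mulSingle v (h v) := by
  funext w
  rw [Finset.prod_apply]
  by_cases hw : w ∈ X
  · rw [Finset.prod_eq_single_of_mem w hw]
    · simp [piProj, hw]
    · intro b hb hbw
      exact Pi.mulSingle_eq_of_ne (Ne.symm hbw) _
  · rw [Finset.prod_eq_one]
    · simp [piProj, hw]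
    · intro b hb
      exact Pi.mulSingle_eq_of_ne (fun hwb => hw (by rw [hwb]; exact hb)) _

lemma keyOf {W : Type*} [Fintype W] [DecidableEq W] (J : W → Type*)
    [∀ v, CommGroup (J v)] (h : ∀ v, J v) :
    ∑ X : Finset W, (-1 : ℤ) ^ ((Finset.univ \ X).card) •
      MonoidAlgebra.of ℤ (∀ v, J v) (piProj J X h) ∈
        augmentationIdeal (∀ v, J v) ^ Fintype.card W := by
  have key : ∑ X : Finset W, (-1 : ℤ) ^ ((Finset.univ \ X).card) •
      MonoidAlgebra.of ℤ (∀ v, J v) (piProj J X h)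
      = ∏ v : W, (MonoidAlgebra.of ℤ (∀ v, J v) (Pi.mulSingle v (h v)) - 1) := by
    have := Finset.prod_add (fun v : W => MonoidAlgebra.of ℤ (∀ v, J v) (Pi.mulSingle v (h v)))
      (fun _ => (-1 : MonoidAlgebra ℤ (∀ v, J v))) Finset.univ
    simp only [Finset.powerset_univ] at this
    calc ∑ X : Finset W, (-1 : ℤ) ^ ((Finset.univ \ X).card) •
          MonoidAlgebra.of ℤ (∀ v, J v) (piProj J X h)
        = ∑ X : Finset W, (∏ v ∈ X, MonoidAlgebra.of ℤ (∀ v, J v) (Pi.mulSingle v (h v))) *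
            ∏ _v ∈ Finset.univ \ X, (-1 : MonoidAlgebra ℤ (∀ v, J v)) := by
          refine Finset.sum_congr rfl fun X _ => ?_
          rw [piProj_eq_prod, map_prod, Finset.prod_const, zsmul_eq_mul, mul_comm]
          push_cast
          ring
      _ = ∏ v : W, (MonoidAlgebra.of ℤ (∀ v, J v) (Pi.mulSingle v (h v)) - 1) := by
          rw [← this]
          refine Finset.prod_congr rfl fun v _ => ?_
          ring
  rw [key, ← Finset.card_univ]
  exact prod_mem_pow _ _ _ fun v _ => of_sub_one_mem _

lemma key_sum {W : Type*} [Fintype W] [DecidableEq W] (J : W → Type*)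
    [∀ v, CommGroup (J v)] (z : MonoidAlgebra ℤ (∀ v, J v)) :
    ∑ X : Finset W, (-1 : ℤ) ^ ((Finset.univ \ X).card) •
      MonoidAlgebra.mapDomainRingHom ℤ (piProj J X) z ∈
        augmentationIdeal (∀ v, J v) ^ Fintype.card W := by
  induction z using MonoidAlgebra.induction with
  | zero => simp
  | single_add a b f ha hb ih =>
    have heq : ∀ X : Finset W,
        MonoidAlgebra.mapDomainRingHom ℤ (piProj J X) (MonoidAlgebra.single a b + f)
        = b • MonoidAlgebra.of ℤ (∀ v, J v) (piProj J X a) +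
            MonoidAlgebra.mapDomainRingHom ℤ (piProj J X) f := by
      intro X
      rw [map_add]
      congr 1
      show MonoidAlgebra.mapDomain _ _ = _
      rw [MonoidAlgebra.mapDomain_single]
      simp [MonoidAlgebra.of_apply, Finsupp.smul_single]
    simp only [heq, smul_add, Finset.sum_add_distrib]
    refine add_mem ?_ ih
    have : ∑ X : Finset W, (-1 : ℤ) ^ ((Finset.univ \ X).card) •
        b • MonoidAlgebra.of ℤ (∀ v, J v) (piProj J X a)
        = b • ∑ X : Finset W, (-1 : ℤ) ^ ((Finset.univ \ X).card) •
            MonoidAlgebra.of ℤ (∀ v, J v) (piProj J X a) := by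
      rw [Finset.smul_sum]
      exact Finset.sum_congr rfl fun X _ => smul_comm _ _ _
    rw [this]
    exact zsmul_mem (keyOf J a) b

/-- Let `W` be a nonempty finite set, `(J v)_{v ∈ W}` a family of finite abelian groups,
`H = ∏_{v ∈ W} J v`, and `d := |W| - 1`.  Let `M` be any `ℤ`-module, and for `X ⊆ W` let
`g X` be the endomorphism of `M ⊗_ℤ ℤ[H]/I(H)^(d+1)` induced by `π_X` (i.e. the `ℤ`-linear
map with `g X (m ⊗ z mod I^(d+1)) = m ⊗ (π_X z mod I^(d+1))`, which is well defined since
`π_X (I(H)) ⊆ I(H)`).  Then every `a ∈ M ⊗_ℤ ℤ[H]/I(H)^(d+1)` satisfies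
`a = -∑_{X ⊆ W, X ≠ W} (-1)^|W∖X| g X a`. -/
theorem eq_neg_sum_proper_subsets {W : Type*} [Fintype W] [DecidableEq W] [Nonempty W]
    (J : W → Type*) [∀ v, CommGroup (J v)] [∀ v, Fintype (J v)]
    (M : Type*) [AddCommGroup M]
    (g : Finset W →
      (M ⊗[ℤ] (MonoidAlgebra ℤ (∀ v, J v) ⧸
          augmentationIdeal (∀ v, J v) ^ (Fintype.card W - 1 + 1)) →ₗ[ℤ]
        M ⊗[ℤ] (MonoidAlgebra ℤ (∀ v, J v) ⧸
          augmentationIdeal (∀ v, J v) ^ (Fintype.card W - 1 + 1))))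
    (hg : ∀ (X : Finset W) (m : M) (z : MonoidAlgebra ℤ (∀ v, J v)),
      g X (m ⊗ₜ Ideal.Quotient.mk (augmentationIdeal (∀ v, J v) ^ (Fintype.card W - 1 + 1)) z) =
        m ⊗ₜ Ideal.Quotient.mk (augmentationIdeal (∀ v, J v) ^ (Fintype.card W - 1 + 1))
          (MonoidAlgebra.mapDomainRingHom ℤ (piProj J X) z))
    (a : M ⊗[ℤ] (MonoidAlgebra ℤ (∀ v, J v) ⧸
        augmentationIdeal (∀ v, J v) ^ (Fintype.card W - 1 + 1))) :
    a = -∑ X ∈ (Finset.univ : Finset (Finset W)).erase Finset.univ,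
        ((-1 : ℤ) ^ (Finset.univ \ X).card) • g X a := by
  classical
  have hcard : Fintype.card W - 1 + 1 = Fintype.card W :=
    Nat.succ_pred_eq_of_pos Fintype.card_pos
  have hF : (∑ X : Finset W, ((-1 : ℤ) ^ ((Finset.univ \ X).card)) • g X) = 0 := by
    refine LinearMap.ext fun x => ?_
    induction x using TensorProduct.induction_on with
    | zero => rw [map_zero, map_zero]
    | add x y hx hy => rw [map_add, map_add, hx, hy]
    | tmul m q =>
    obtain ⟨z, rfl⟩ := Ideal.Quotient.mk_surjective q
    simp only [LinearMap.sum_apply, LinearMap.smul_apply, hg, LinearMap.zero_apply]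
    have step : ∀ X : Finset W, ((-1 : ℤ) ^ ((Finset.univ \ X).card)) •
        (m ⊗ₜ[ℤ] Ideal.Quotient.mk (augmentationIdeal (∀ v, J v) ^ (Fintype.card W - 1 + 1))
          (MonoidAlgebra.mapDomainRingHom ℤ (piProj J X) z))
        = m ⊗ₜ[ℤ] Ideal.Quotient.mk (augmentationIdeal (∀ v, J v) ^ (Fintype.card W - 1 + 1))
            (((-1 : ℤ) ^ ((Finset.univ \ X).card)) •
              MonoidAlgebra.mapDomainRingHom ℤ (piProj J X) z) := by
      intro X
      rw [map_zsmul, TensorProduct.tmul_smul]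
    rw [Finset.sum_congr rfl fun X _ => step X, ← TensorProduct.tmul_sum, ← map_sum]
    rw [Ideal.Quotient.eq_zero_iff_mem.2 ?_, TensorProduct.tmul_zero]
    rw [hcard]
    exact key_sum J z
  have hid : g Finset.univ a = a := by
    have : g Finset.univ = LinearMap.id := by
      refine LinearMap.ext fun x => ?_
      induction x using TensorProduct.induction_on with
      | zero => rw [map_zero, map_zero]
      | add x y hx hy => rw [map_add, map_add, hx, hy]
      | tmul m q =>
      obtain ⟨z, rfl⟩ := Ideal.Quotient.mk_surjective q
      rw [hg]
      have hpi : piProj J (Finset.univ : Finset W) = MonoidHom.id _ := by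
        ext σ
        simp [piProj]
      have hz : (MonoidAlgebra.mapDomainRingHom ℤ (piProj J (Finset.univ : Finset W))) z = z := by
        rw [hpi]
        rw [MonoidAlgebra.mapDomainRingHom_id]
        rfl
      rw [hz, LinearMap.id_apply]
    rw [this, LinearMap.id_apply]
  have h0 : ∑ X : Finset W, ((-1 : ℤ) ^ ((Finset.univ \ X).card)) • g X a = 0 := by
    have := DFunLike.congr_fun hF a
    simp only [LinearMap.sum_apply, LinearMap.smul_apply, LinearMap.zero_apply] at this
    exact this
  rw [← Finset.add_sum_erase _ _ (Finset.mem_univ (Finset.univ : Finset W))] at h0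
  simp only [Finset.sdiff_self, Finset.card_empty, pow_zero, one_smul, hid] at h0
  exact eq_neg_of_add_eq_zero_left h0
end
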